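/- arXiv:1011.2290 — 2 statements merged into one kernel-verified Lean document; each statement's English description precedes it below -/
import Mathlib

section
/- Let (N, μ) be a measure space, E a complex Hilbert space, and C ≥ 0. Let j : ℝ × N → ℝ be such that j(t,x) > 0 for all t, x and, for all s ≤ t and all x ∈ N, e^{-C(t-s)}·j(s,x) ≤ j(t,x) ≤ e^{C(t-s)}·j(s,x). For measurable σ₁, σ₂ : N → E define (σ₁,σ₂)_t := ∫_N ⟨σ₁(x),σ₂(x)⟩ j(t,x) dμ(x) and ‖σ‖_t := ((σ,σ)_t)^{1/2}. If s ≤ t, x ↦ j(t,x) and x ↦ j(s,x) are measurable, and ∫_N ‖σ_i(x)‖² j(s,x) dμ(x) < ∞ for i = 1,2, then |(σ₁,σ₂)_t − (σ₁,σ₂)_s| ≤ (e^{C(t-s)} − 1)·‖σ₁‖_s·‖σ₂‖_s. -/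
open MeasureTheory

theorem stmt0 {N : Type*} [MeasurableSpace N] (μ : Measure N)
    {E : Type*} [NormedAddCommGroup E] [InnerProductSpace ℂ E]
    (C : ℝ) (hC : 0 ≤ C) (j : ℝ × N → ℝ)
    (hpos : ∀ t x, 0 < j (t, x))
    (hbound : ∀ s t : ℝ, s ≤ t → ∀ x,
      Real.exp (-C * (t - s)) * j (s, x) ≤ j (t, x) ∧
        j (t, x) ≤ Real.exp (C * (t - s)) * j (s, x))
    (σ₁ σ₂ : N → E)
    (hσ₁ : AEStronglyMeasurable σ₁ μ) (hσ₂ : AEStronglyMeasurable σ₂ μ)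
    (s t : ℝ) (hst : s ≤ t)
    (hjt : Measurable fun x => j (t, x)) (hjs : Measurable fun x => j (s, x))
    (hint₁ : Integrable (fun x => ‖σ₁ x‖ ^ 2 * j (s, x)) μ)
    (hint₂ : Integrable (fun x => ‖σ₂ x‖ ^ 2 * j (s, x)) μ) :
    ‖(∫ x, (inner ℂ (σ₁ x) (σ₂ x) : ℂ) * (j (t, x) : ℂ) ∂μ)
        - ∫ x, (inner ℂ (σ₁ x) (σ₂ x) : ℂ) * (j (s, x) : ℂ) ∂μ‖
      ≤ (Real.exp (C * (t - s)) - 1)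
        * Real.sqrt (∫ x, ‖σ₁ x‖ ^ 2 * j (s, x) ∂μ)
        * Real.sqrt (∫ x, ‖σ₂ x‖ ^ 2 * j (s, x) ∂μ) := by
  set Δ := C * (t - s) with hΔdef
  have hΔ : 0 ≤ Δ := mul_nonneg hC (by linarith)
  have hE : (1 : ℝ) ≤ Real.exp Δ := Real.one_le_exp hΔ
  -- pointwise bound on |j t - j s|
  have hjdiff : ∀ x, |j (t, x) - j (s, x)| ≤ (Real.exp Δ - 1) * j (s, x) := by
    intro x
    obtain ⟨h1, h2⟩ := hbound s t hst x
    rw [abs_le]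
    constructor
    · have hexp : 1 - Real.exp (-Δ) ≤ Real.exp Δ - 1 := by
        have ha := Real.add_one_le_exp Δ
        have hb := Real.add_one_le_exp (-Δ)
        nlinarith
      have : Real.exp (-Δ) * j (s, x) ≤ j (t, x) := by
        simpa [neg_mul] using h1
      nlinarith [(hpos s x).le]
    · nlinarith [(hpos s x).le]
  -- measurability of the norms product
  have hmeas : AEStronglyMeasurable (fun x => ‖σ₁ x‖ * ‖σ₂ x‖ * j (s, x)) μ :=
    (hσ₁.norm.mul hσ₂.norm).mul hjs.aestronglyMeasurable
  -- integrability of g = ‖σ₁‖‖σ₂‖ j s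
  have hg : Integrable (fun x => ‖σ₁ x‖ * ‖σ₂ x‖ * j (s, x)) μ := by
    refine Integrable.mono'
      ((hint₁.add hint₂).const_mul (1 / 2 : ℝ)) hmeas ?_
    filter_upwards with x
    have hjx := (hpos s x).le
    have : ‖σ₁ x‖ * ‖σ₂ x‖ ≤ (‖σ₁ x‖ ^ 2 + ‖σ₂ x‖ ^ 2) / 2 := by
      nlinarith [sq_nonneg (‖σ₁ x‖ - ‖σ₂ x‖)]
    rw [Real.norm_of_nonneg (by positivity)]
    simp only [Pi.add_apply]
    nlinarith
  have hinnermeas : AEStronglyMeasurable (fun x => (inner ℂ (σ₁ x) (σ₂ x) : ℂ)) μ :=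
    hσ₁.inner hσ₂
  have hinnerbound : ∀ x, ‖(inner ℂ (σ₁ x) (σ₂ x) : ℂ)‖ ≤ ‖σ₁ x‖ * ‖σ₂ x‖ := fun x =>
    norm_inner_le_norm _ _
  -- integrability of the two integrands
  have hIs : Integrable (fun x => (inner ℂ (σ₁ x) (σ₂ x) : ℂ) * (j (s, x) : ℂ)) μ := by
    refine Integrable.mono' hg (hinnermeas.mul
      (Complex.measurable_ofReal.comp hjs).aestronglyMeasurable) ?_
    filter_upwards with x
    rw [norm_mul, Complex.norm_real, Real.norm_of_nonneg (hpos s x).le]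
    exact mul_le_mul_of_nonneg_right (hinnerbound x) (hpos s x).le
  have hIt : Integrable (fun x => (inner ℂ (σ₁ x) (σ₂ x) : ℂ) * (j (t, x) : ℂ)) μ := by
    refine Integrable.mono' (hg.const_mul (Real.exp Δ)) (hinnermeas.mul
      (Complex.measurable_ofReal.comp hjt).aestronglyMeasurable) ?_
    filter_upwards with x
    rw [norm_mul, Complex.norm_real, Real.norm_of_nonneg (hpos t x).le]
    have h2 := (hbound s t hst x).2
    have := hinnerbound x
    have hn : (0:ℝ) ≤ ‖(inner ℂ (σ₁ x) (σ₂ x) : ℂ)‖ := norm_nonneg _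
    calc ‖(inner ℂ (σ₁ x) (σ₂ x) : ℂ)‖ * j (t, x)
        ≤ ‖σ₁ x‖ * ‖σ₂ x‖ * (Real.exp Δ * j (s, x)) := by
          apply mul_le_mul this h2 (hpos t x).le (by positivity)
      _ = Real.exp Δ * (‖σ₁ x‖ * ‖σ₂ x‖ * j (s, x)) := by ring
  -- step 1 : difference bound
  have step1 : ‖(∫ x, (inner ℂ (σ₁ x) (σ₂ x) : ℂ) * (j (t, x) : ℂ) ∂μ)
        - ∫ x, (inner ℂ (σ₁ x) (σ₂ x) : ℂ) * (j (s, x) : ℂ) ∂μ‖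
      ≤ (Real.exp Δ - 1) * ∫ x, ‖σ₁ x‖ * ‖σ₂ x‖ * j (s, x) ∂μ := by
    rw [← integral_sub hIt hIs]
    calc ‖∫ x, ((inner ℂ (σ₁ x) (σ₂ x) : ℂ) * (j (t, x) : ℂ)
            - (inner ℂ (σ₁ x) (σ₂ x) : ℂ) * (j (s, x) : ℂ)) ∂μ‖
        ≤ ∫ x, ‖(inner ℂ (σ₁ x) (σ₂ x) : ℂ) * (j (t, x) : ℂ)
            - (inner ℂ (σ₁ x) (σ₂ x) : ℂ) * (j (s, x) : ℂ)‖ ∂μ :=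
          norm_integral_le_integral_norm _
      _ ≤ ∫ x, (Real.exp Δ - 1) * (‖σ₁ x‖ * ‖σ₂ x‖ * j (s, x)) ∂μ := by
          refine integral_mono (hIt.sub hIs).norm (hg.const_mul _) fun x => ?_
          rw [← mul_sub, norm_mul]
          have : ‖((j (t, x) : ℂ)) - ((j (s, x) : ℂ))‖ = |j (t, x) - j (s, x)| := by
            rw [← Complex.ofReal_sub, Complex.norm_real, Real.norm_eq_abs]
          rw [this]
          calc ‖(inner ℂ (σ₁ x) (σ₂ x) : ℂ)‖ * |j (t, x) - j (s, x)|
              ≤ ‖σ₁ x‖ * ‖σ₂ x‖ * ((Real.exp Δ - 1) * j (s, x)) :=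
                mul_le_mul (hinnerbound x) (hjdiff x) (abs_nonneg _) (by positivity)
            _ = (Real.exp Δ - 1) * (‖σ₁ x‖ * ‖σ₂ x‖ * j (s, x)) := by ring
      _ = (Real.exp Δ - 1) * ∫ x, ‖σ₁ x‖ * ‖σ₂ x‖ * j (s, x) ∂μ :=
          integral_const_mul _ _
  -- step 2 : Cauchy-Schwarz
  have step2 : (∫ x, ‖σ₁ x‖ * ‖σ₂ x‖ * j (s, x) ∂μ)
      ≤ Real.sqrt (∫ x, ‖σ₁ x‖ ^ 2 * j (s, x) ∂μ)
        * Real.sqrt (∫ x, ‖σ₂ x‖ ^ 2 * j (s, x) ∂μ) := by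
    have hpq : Real.HolderConjugate 2 2 := Real.HolderConjugate.two_two
    have hsqmeas : AEStronglyMeasurable (fun x => Real.sqrt (j (s, x))) μ :=
      (hjs.sqrt).aestronglyMeasurable
    have hsq : ∀ x, Real.sqrt (j (s, x)) ^ 2 = j (s, x) := fun x =>
      Real.sq_sqrt (hpos s x).le
    have hf : MemLp (fun x => ‖σ₁ x‖ * Real.sqrt (j (s, x))) (ENNReal.ofReal 2) μ := by
      rw [show ENNReal.ofReal 2 = 2 by norm_num]
      refine (memLp_two_iff_integrable_sq ?_).mpr ?_
      · exact hσ₁.norm.mul hsqmeas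
      have : (fun x => (‖σ₁ x‖ * Real.sqrt (j (s, x))) ^ 2)
          = fun x => ‖σ₁ x‖ ^ 2 * j (s, x) := by
        funext x; rw [mul_pow, hsq x]
      · rw [this]; exact hint₁
    have hgm : MemLp (fun x => ‖σ₂ x‖ * Real.sqrt (j (s, x))) (ENNReal.ofReal 2) μ := by
      rw [show ENNReal.ofReal 2 = 2 by norm_num]
      refine (memLp_two_iff_integrable_sq ?_).mpr ?_
      · exact hσ₂.norm.mul hsqmeas
      have : (fun x => (‖σ₂ x‖ * Real.sqrt (j (s, x))) ^ 2)
          = fun x => ‖σ₂ x‖ ^ 2 * j (s, x) := by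
        funext x; rw [mul_pow, hsq x]
      · rw [this]; exact hint₂
    have key := integral_mul_le_Lp_mul_Lq_of_nonneg hpq
      (f := fun x => ‖σ₁ x‖ * Real.sqrt (j (s, x)))
      (g := fun x => ‖σ₂ x‖ * Real.sqrt (j (s, x)))
      (Filter.Eventually.of_forall fun x => by positivity)
      (Filter.Eventually.of_forall fun x => by positivity) hf hgm
    have h1 : (fun x => (‖σ₁ x‖ * Real.sqrt (j (s, x))) * (‖σ₂ x‖ * Real.sqrt (j (s, x))))
        = fun x => ‖σ₁ x‖ * ‖σ₂ x‖ * j (s, x) := by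
      funext x
      linear_combination ‖σ₁ x‖ * ‖σ₂ x‖ * hsq x
    have h2 : (fun x => (‖σ₁ x‖ * Real.sqrt (j (s, x))) ^ (2:ℝ))
        = fun x => ‖σ₁ x‖ ^ 2 * j (s, x) := by
      funext x
      rw [show ((2:ℝ)) = ((2:ℕ):ℝ) by norm_num, Real.rpow_natCast, mul_pow, hsq x]
    have h3 : (fun x => (‖σ₂ x‖ * Real.sqrt (j (s, x))) ^ (2:ℝ))
        = fun x => ‖σ₂ x‖ ^ 2 * j (s, x) := by
      funext x
      rw [show ((2:ℝ)) = ((2:ℕ):ℝ) by norm_num, Real.rpow_natCast, mul_pow, hsq x]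
    beta_reduce at key
    rw [h1, h2, h3] at key
    calc (∫ x, ‖σ₁ x‖ * ‖σ₂ x‖ * j (s, x) ∂μ)
        ≤ (∫ x, ‖σ₁ x‖ ^ 2 * j (s, x) ∂μ) ^ ((1:ℝ)/2)
          * (∫ x, ‖σ₂ x‖ ^ 2 * j (s, x) ∂μ) ^ ((1:ℝ)/2) := key
      _ = _ := by
          rw [← Real.sqrt_eq_rpow, ← Real.sqrt_eq_rpow]
  calc ‖(∫ x, (inner ℂ (σ₁ x) (σ₂ x) : ℂ) * (j (t, x) : ℂ) ∂μ)
        - ∫ x, (inner ℂ (σ₁ x) (σ₂ x) : ℂ) * (j (s, x) : ℂ) ∂μ‖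
      ≤ (Real.exp Δ - 1) * ∫ x, ‖σ₁ x‖ * ‖σ₂ x‖ * j (s, x) ∂μ := step1
    _ ≤ (Real.exp Δ - 1) * (Real.sqrt (∫ x, ‖σ₁ x‖ ^ 2 * j (s, x) ∂μ)
          * Real.sqrt (∫ x, ‖σ₂ x‖ ^ 2 * j (s, x) ∂μ)) :=
        mul_le_mul_of_nonneg_left step2 (by linarith)
    _ = _ := by ring
end

section
/- For every even integer n ≥ 2, one has Σ_{0 ≤ k < l ≤ n} (−1)^k · C(n,k) · C(n,l) · (l − k) = n · (−1)^{n/2} · (C(n−2, n/2) − C(n−2, n/2 − 1)), where C(a,b) denotes the binomial coefficient and the sum is over all pairs of integers (k,l) with 0 ≤ k < l ≤ n. -/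
open Finset Polynomial

/-- Partial alternating sum of binomial coefficients. -/
lemma pa (m : ℕ) : ∀ j : ℕ, ∑ k ∈ Finset.range (j+1), (-1:ℤ)^k * ((m+1).choose k : ℤ)
    = (-1:ℤ)^j * (m.choose j : ℤ)
  | 0 => by simp
  | j+1 => by
    rw [Finset.sum_range_succ, pa m j, Nat.choose_succ_succ' m j]
    push_cast
    ring

lemma inner_eq (m : ℕ) : ∀ l : ℕ,
    ∑ k ∈ Finset.range l, (-1:ℤ)^k * ((m+1).choose k : ℤ) * ((l:ℤ) - (k:ℤ))
      = ∑ j ∈ Finset.range l, (-1:ℤ)^j * (m.choose j : ℤ)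
  | 0 => by simp
  | l+1 => by
    have h : ∀ k ∈ Finset.range (l+1),
        (-1:ℤ)^k * ((m+1).choose k : ℤ) * (((l+1 : ℕ):ℤ) - (k:ℤ))
          = ((-1:ℤ)^k * ((m+1).choose k : ℤ) * ((l:ℤ) - (k:ℤ)))
            + (-1:ℤ)^k * ((m+1).choose k : ℤ) := by
      intro k _; push_cast; ring
    rw [Finset.sum_congr rfl h, Finset.sum_add_distrib, pa m l,
      Finset.sum_range_succ (fun k => (-1:ℤ)^k * ((m+1).choose k : ℤ) * ((l:ℤ) - (k:ℤ))),
      inner_eq m l, Finset.sum_range_succ]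
    simp

lemma coeff_one_sub_X_pow (m : ℕ) : ∀ b : ℕ,
    ((1 - X : ℤ[X])^m).coeff b = (-1:ℤ)^b * (m.choose b : ℤ) := by
  induction m with
  | zero =>
    intro b
    rcases b with _ | s <;> simp [Polynomial.coeff_one]
  | succ m ih =>
    intro b
    have h : (1 - X : ℤ[X])^(m+1) = (1-X)^m - (1-X)^m * X := by ring
    rw [h, Polynomial.coeff_sub]
    rcases b with _ | s
    · simp [Polynomial.coeff_mul_X_zero, ih 0]
    · rw [Polynomial.coeff_mul_X, ih (s+1), ih s, Nat.choose_succ_succ' m s]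
      push_cast
      ring

lemma coeff_one_sub_X2_pow (m : ℕ) : ∀ b : ℕ,
    ((1 - X^2 : ℤ[X])^m).coeff b
      = if 2 ∣ b then (-1:ℤ)^(b/2) * (m.choose (b/2) : ℤ) else 0 := by
  induction m with
  | zero =>
    intro b
    rcases b with _ | _ | s
    · simp
    · simp [Polynomial.coeff_one]
    · rw [pow_zero, Polynomial.coeff_one]
      have h1 : ¬ (s + 1 + 1 = 0) := by omega
      by_cases h2 : 2 ∣ (s+1+1)
      · rw [if_neg h1, if_pos h2, Nat.choose_eq_zero_of_lt (by omega)]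
        simp
      · simp [h1, h2]
  | succ m ih =>
    intro b
    have h : (1 - X^2 : ℤ[X])^(m+1) = (1-X^2)^m - (1-X^2)^m * X^2 := by ring
    rw [h, Polynomial.coeff_sub, Polynomial.coeff_mul_X_pow', ih b]
    by_cases hb : 2 ≤ b
    · rw [if_pos hb, ih (b-2)]
      by_cases hd : 2 ∣ b
      · obtain ⟨t, rfl⟩ : ∃ t, b = 2*t+2 := ⟨b/2-1, by omega⟩
        rw [if_pos (show 2 ∣ 2*t+2 from by omega),
          if_pos (show 2 ∣ 2*t+2 from by omega),
          if_pos (show 2 ∣ 2*t+2-2 from by omega),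
          show (2*t+2)/2 = t+1 from by omega, show 2*t+2-2 = 2*t from by omega,
          show (2*t)/2 = t from by omega, Nat.choose_succ_succ' m t]
        push_cast
        ring
      · rw [if_neg hd, if_neg hd, if_neg (show ¬ 2 ∣ b-2 from by omega)]
        ring
    · rw [if_neg hb]
      interval_cases b <;> simp

/-- Key evaluation via generating functions. -/
lemma keyL (p : ℕ) :
    ∑ i ∈ Finset.range (2*p+2), (-1:ℤ)^i * ((2*p+2).choose (i+1) : ℤ) * ((2*p).choose i : ℤ)
      = 2 * (-1:ℤ)^p * ((2*p).choose p : ℤ) := by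
  have h1 : ((1+X : ℤ[X])^(2*p+2) * (1-X)^(2*p)) = (1+X)^2 * (1 - X^2)^(2*p) := by
    have hx : (1+X : ℤ[X]) * (1-X) = 1 - X^2 := by ring
    calc (1+X : ℤ[X])^(2*p+2) * (1-X)^(2*p)
        = (1+X)^2 * ((1+X) * (1-X))^(2*p) := by rw [mul_pow]; ring
      _ = (1+X)^2 * (1 - X^2)^(2*p) := by rw [hx]
  have hL : ∑ i ∈ Finset.range (2*p+2),
      (-1:ℤ)^i * ((2*p+2).choose (i+1) : ℤ) * ((2*p).choose i : ℤ)
        = ((1+X : ℤ[X])^(2*p+2) * (1-X)^(2*p)).coeff (2*p+1) := by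
    rw [Polynomial.coeff_mul, Finset.Nat.sum_antidiagonal_eq_sum_range_succ_mk]
    simp only [Polynomial.coeff_one_add_X_pow, coeff_one_sub_X_pow]
    rw [← Finset.sum_range_reflect]
    apply Finset.sum_congr rfl
    intro j hj
    simp only [Finset.mem_range] at hj
    rw [show 2*p+2-1-j = 2*p+1-j from by omega, show 2*p+1-j+1 = 2*p+2-j from by omega,
      show (2*p+2).choose (2*p+2-j) = (2*p+2).choose j from Nat.choose_symm (by omega)]
    ring
  have hR : ((1+X : ℤ[X])^2 * (1 - X^2)^(2*p)).coeff (2*p+1)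
      = 2 * (-1:ℤ)^p * ((2*p).choose p : ℤ) := by
    have hq : ((1+X : ℤ[X])^2 * (1 - X^2)^(2*p))
        = (1-X^2)^(2*p) + ((1-X^2)^(2*p) * X + (1-X^2)^(2*p) * X) + (1-X^2)^(2*p) * X^2 := by
      ring
    rw [hq, Polynomial.coeff_add, Polynomial.coeff_add, Polynomial.coeff_add,
      Polynomial.coeff_mul_X, Polynomial.coeff_mul_X_pow',
      coeff_one_sub_X2_pow, coeff_one_sub_X2_pow]
    have hodd : ¬ 2 ∣ (2*p+1) := by omega
    rw [if_neg hodd, if_pos (by omega : 2 ∣ 2*p), show (2*p)/2 = p from by omega]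
    have h3 : (if 2 ≤ 2*p+1 then ((1-X^2 : ℤ[X])^(2*p)).coeff (2*p+1-2) else 0) = 0 := by
      by_cases hp : 2 ≤ 2*p+1
      · rw [if_pos hp, coeff_one_sub_X2_pow, if_neg (by omega)]
      · rw [if_neg hp]
    rw [h3]
    ring
  rw [hL, h1, hR]

theorem stmt18 (n : ℕ) (hn : 2 ≤ n) (heven : Even n) :
    ∑ l ∈ Finset.range (n + 1), ∑ k ∈ Finset.range l,
        (-1 : ℤ) ^ k * (n.choose k : ℤ) * (n.choose l : ℤ) * ((l : ℤ) - (k : ℤ))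
      = (n : ℤ) * ((-1 : ℤ) ^ (n / 2)
        * (((n - 2).choose (n / 2) : ℤ) - ((n - 2).choose (n / 2 - 1) : ℤ))) := by
  obtain ⟨m, rfl⟩ : ∃ m, n = 2*m+2 := by
    rcases heven with ⟨q, hq⟩; exact ⟨q-1, by omega⟩
  rw [show (2*m+2)/2 = m+1 from by omega, show 2*m+2-2 = 2*m from by omega,
    show m+1-1 = m from by omega]
  have h1 : ∀ l ∈ Finset.range (2*m+2+1),
      (∑ k ∈ Finset.range l,
        (-1:ℤ)^k * ((2*m+2).choose k : ℤ) * ((2*m+2).choose l : ℤ) * ((l:ℤ) - (k:ℤ)))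
      = ((2*m+2).choose l : ℤ) * ∑ j ∈ Finset.range l, (-1:ℤ)^j * ((2*m+1).choose j : ℤ) := by
    intro l _
    rw [← inner_eq (2*m+1) l, Finset.mul_sum]
    apply Finset.sum_congr rfl
    intro k _
    rw [show 2*m+1+1 = 2*m+2 from by omega]
    ring
  rw [Finset.sum_congr rfl h1, Finset.sum_range_succ'
    (fun l => ((2*m+2).choose l : ℤ) * ∑ j ∈ Finset.range l, (-1:ℤ)^j * ((2*m+1).choose j : ℤ))
    (2*m+2)]
  have h2 : ∀ i ∈ Finset.range (2*m+2),
      ((2*m+2).choose (i+1) : ℤ) * ∑ j ∈ Finset.range (i+1), (-1:ℤ)^j * ((2*m+1).choose j : ℤ)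
        = (-1:ℤ)^i * ((2*m+2).choose (i+1) : ℤ) * ((2*m).choose i : ℤ) := by
    intro i _
    rw [pa (2*m) i]
    ring
  rw [Finset.sum_congr rfl h2, keyL m]
  have hch : ((2*m).choose (m+1) : ℤ) * ((m:ℤ)+1) = ((2*m).choose m : ℤ) * (m:ℤ) := by
    have h := Nat.choose_succ_right_eq (2*m) m
    rw [show 2*m - m = m from by omega] at h
    exact_mod_cast h
  rw [pow_succ]
  push_cast
  linear_combination (2*(-1:ℤ)^m) * hch
end
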